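/- arXiv:2307.03209 — 3 statements merged into one kernel-verified Lean document; each statement's English description precedes it below -/
import Mathlib

section
/- The Laplacian matrix L = D - A of any semigraph G is positive semi-definite. -/
open Matrix BigOperators

/-- A semigraph on a finite vertex type `V`: edges are ordered tuples (lists) of
distinct vertices, of length at least 2, and any two distinct edges share at most
one vertex. -/
structure Semigraph (V : Type) [Fintype V] [DecidableEq V] where
  edges : Finset (List V)
  nodup : ∀ e ∈ edges, e.Nodup
  two_le : ∀ e ∈ edges, 2 ≤ e.length
  inter : ∀ e₁ ∈ edges, ∀ e₂ ∈ edges, e₁ ≠ e₂ → (e₁.toFinset ∩ e₂.toFinset).card ≤ 1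

namespace Semigraph

variable {V : Type} [Fintype V] [DecidableEq V] (G : Semigraph V)

/-- `v` is an end vertex of the edge `e`. -/
def IsEndOf (v : V) (e : List V) : Prop := e.head? = some v ∨ e.getLast? = some v

/-- `v` is a middle vertex of the edge `e`. -/
def IsMiddleOf (v : V) (e : List V) : Prop := v ∈ e ∧ ¬ IsEndOf v e

/-- `v` is a middle end vertex: a middle vertex of some edge and an end vertex of
some (other) edge. -/
def IsMiddleEnd (v : V) : Prop :=
  (∃ e ∈ G.edges, IsMiddleOf v e) ∧ (∃ e ∈ G.edges, IsEndOf v e)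

/-- `v` is a pure end vertex: it lies on some edge and is an end vertex of every
edge containing it. -/
def IsPureEnd (v : V) : Prop :=
  (∃ e ∈ G.edges, v ∈ e) ∧ ∀ e ∈ G.edges, v ∈ e → IsEndOf v e

open Classical in
/-- The adjacency weight contributed by the edge `e` to the pair of vertices `(u, v)`:
the skeleton distance between `u` and `v` inside `e`, halved once for a partial half
edge at the head, and halved once for a partial half edge at the tail (so a quarter
edge gets weight `1/4`). -/
noncomputable def pairWeight (e : List V) (u v : V) : ℝ :=
  if u ∈ e ∧ v ∈ e ∧ u ≠ v then
    (Nat.dist (e.idxOf u) (e.idxOf v) : ℝ) *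
      (if ({e.idxOf u, e.idxOf v} : Set ℕ) = {0, 1} ∧
          (∃ w, e.head? = some w ∧ G.IsMiddleEnd w) then (1:ℝ)/2 else 1) *
      (if ({e.idxOf u, e.idxOf v} : Set ℕ) = {e.length - 2, e.length - 1} ∧
          (∃ w, e.getLast? = some w ∧ G.IsMiddleEnd w) then (1:ℝ)/2 else 1)
  else 0

/-- The adjacency matrix of a semigraph. -/
noncomputable def adj : Matrix V V ℝ :=
  fun u v => ∑ e ∈ G.edges, G.pairWeight e u v

/-- The degree of a vertex: the corresponding row sum of the adjacency matrix. -/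
noncomputable def degree (v : V) : ℝ := ∑ u, G.adj v u

/-- The Laplacian matrix `L = D - A` of a semigraph. -/
noncomputable def lap : Matrix V V ℝ :=
  Matrix.diagonal G.degree - G.adj

/-- The Laplacian of a single edge, padded by zeros to an `n × n` matrix. -/
noncomputable def edgeLap (e : List V) : Matrix V V ℝ :=
  fun u v => if u = v then ∑ w, G.pairWeight e u w else - G.pairWeight e u v

/-- Two vertices are adjacent if they lie on a common edge. -/
def Adjacent (u v : V) : Prop := u ≠ v ∧ ∃ e ∈ G.edges, u ∈ e ∧ v ∈ e

/-- A semigraph is connected if any two vertices are joined by a chain of edges. -/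
def Connected : Prop :=
  ∀ u v : V, Relation.ReflTransGen (fun a b => ∃ e ∈ G.edges, a ∈ e ∧ b ∈ e) u v

end Semigraph

section Aux

variable {V : Type} [Fintype V] [DecidableEq V] (G : Semigraph V)

lemma pw_nonneg (e : List V) (u v : V) : 0 ≤ G.pairWeight e u v := by
  unfold Semigraph.pairWeight
  split_ifs <;> positivity

lemma pw_symm (e : List V) (u v : V) : G.pairWeight e u v = G.pairWeight e v u := by
  unfold Semigraph.pairWeight
  have hd : Nat.dist (e.idxOf u) (e.idxOf v) = Nat.dist (e.idxOf v) (e.idxOf u) :=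
    Nat.dist_comm _ _
  have hs : ({e.idxOf u, e.idxOf v} : Set ℕ) = {e.idxOf v, e.idxOf u} :=
    Set.pair_comm _ _
  by_cases h : u ∈ e ∧ v ∈ e ∧ u ≠ v
  · conv_lhs => rw [if_pos h, hd, hs]
    conv_rhs => rw [if_pos (show v ∈ e ∧ u ∈ e ∧ v ≠ u from ⟨h.2.1, h.1, h.2.2.symm⟩)]
  · rw [if_neg h, if_neg (fun hc => h ⟨hc.2.1, hc.1, hc.2.2.symm⟩)]

lemma pw_diag (e : List V) (u : V) : G.pairWeight e u u = 0 := by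
  unfold Semigraph.pairWeight
  rw [if_neg]
  rintro ⟨-, -, h⟩
  exact h rfl

lemma key_quad {W : V → V → ℝ}
    (hsymm : ∀ u v, W u v = W v u) (hnn : ∀ u v, 0 ≤ W u v)
    (x : V → ℝ) :
    0 ≤ (∑ u, ∑ v, W u v * x u ^ 2) - ∑ u, ∑ v, W u v * (x u * x v) := by
  have hAC : (∑ u, ∑ v, W u v * x u ^ 2) = ∑ u, ∑ v, W u v * x v ^ 2 := by
    rw [Finset.sum_comm]
    exact Finset.sum_congr rfl fun u _ => Finset.sum_congr rfl fun v _ => by rw [hsymm]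
  have hS : 0 ≤ ∑ u, ∑ v, W u v * (x u - x v) ^ 2 :=
    Finset.sum_nonneg fun u _ => Finset.sum_nonneg fun v _ =>
      mul_nonneg (hnn u v) (sq_nonneg _)
  have hexp : (∑ u, ∑ v, W u v * (x u - x v) ^ 2)
      = (∑ u, ∑ v, W u v * x u ^ 2) + (∑ u, ∑ v, W u v * x v ^ 2)
        - 2 * ∑ u, ∑ v, W u v * (x u * x v) := by
    rw [Finset.mul_sum, ← Finset.sum_add_distrib, ← Finset.sum_sub_distrib]
    refine Finset.sum_congr rfl fun u _ => ?_
    rw [Finset.mul_sum, ← Finset.sum_add_distrib, ← Finset.sum_sub_distrib]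
    exact Finset.sum_congr rfl fun v _ => by ring
  nlinarith [hS, hexp, hAC]

end Aux

/-- The Laplacian matrix `L = D - A` of any semigraph is positive
semi-definite. -/
theorem stmt3 {V : Type} [Fintype V] [DecidableEq V] (G : Semigraph V) :
    G.lap.PosSemidef := by
  set W : V → V → ℝ := G.adj with hW
  have hsymm : ∀ u v, W u v = W v u := fun u v =>
    Finset.sum_congr rfl fun e _ => pw_symm G e u v
  have hnn : ∀ u v, 0 ≤ W u v := fun u v =>
    Finset.sum_nonneg fun e _ => pw_nonneg G e u v
  have hdiag : ∀ u, W u u = 0 := fun u =>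
    Finset.sum_eq_zero fun e _ => pw_diag G e u
  have hlap : ∀ u v, G.lap u v = (if u = v then ∑ w, W u w else 0) - W u v := by
    intro u v
    by_cases h : u = v
    · subst h
      simp [Semigraph.lap, Matrix.diagonal, Semigraph.degree, hdiag u, hW]
    · simp [Semigraph.lap, Matrix.diagonal, h, hW]
  rw [Matrix.posSemidef_iff_dotProduct_mulVec]
  constructor
  · ext u v
    simp only [Matrix.conjTranspose_apply, star_trivial, hlap]
    rw [hsymm v u]
    by_cases h : u = v
    · simp [h]
    · simp [h, Ne.symm h]
  · intro x
    simp only [dotProduct, Matrix.mulVec, dotProduct, star_trivial]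
    have : ∀ u, x u * ∑ v, G.lap u v * x v
        = (∑ v, (if u = v then ∑ w, W u w else 0) * (x u * x v))
          - ∑ v, W u v * (x u * x v) := by
      intro u
      simp only [star_trivial, hlap]
      rw [Finset.mul_sum, ← Finset.sum_sub_distrib]
      exact Finset.sum_congr rfl fun v _ => by ring
    rw [Finset.sum_congr rfl fun u _ => this u, Finset.sum_sub_distrib]
    have h1 : ∀ u, (∑ v, (if u = v then ∑ w, W u w else 0) * (x u * x v))
        = ∑ w, W u w * x u ^ 2 := by
      intro u
      simp only [ite_mul, zero_mul]
      rw [Finset.sum_ite_eq (Finset.univ : Finset V) u (fun v => (∑ w, W u w) * (x u * x v))]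
      simp only [Finset.mem_univ, if_true, Finset.sum_mul]
      exact Finset.sum_congr rfl fun w _ => by ring
    rw [Finset.sum_congr rfl fun u _ => h1 u]
    exact key_quad hsymm hnn x
end

section
/- The signless Laplacian Q = D + A of any semigraph G is positive semi-definite, and its quadratic form satisfies x^T Q x = Σ_{e ∈ E} Σ_j Σ_i μ_{ji} (x_j + x_{j+i})², a sum over all pairs of adjacent vertices within each edge with positive weights μ_{ji}. -/
open Matrix BigOperators

section Aux
variable {V : Type} [Fintype V] [DecidableEq V] (G : Semigraph V)

lemma adj_symm (u v : V) : G.adj u v = G.adj v u :=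
  Finset.sum_congr rfl fun e _ => pw_symm G e u v

lemma adj_nonneg (u v : V) : 0 ≤ G.adj u v :=
  Finset.sum_nonneg fun e _ => pw_nonneg G e u v

lemma key_quad_s4 (x : V → ℝ) :
    x ⬝ᵥ (Matrix.diagonal G.degree + G.adj) *ᵥ x
      = ∑ u, ∑ v, (1/2 : ℝ) * G.adj u v * (x u + x v)^2 := by
  have swap : ∑ u, ∑ v, (1/2:ℝ) * G.adj u v * x v ^ 2
      = ∑ u, ∑ v, (1/2:ℝ) * G.adj u v * x u ^ 2 := by
    rw [Finset.sum_comm]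
    exact Finset.sum_congr rfl fun v _ => Finset.sum_congr rfl fun u _ => by
      rw [adj_symm]
  have expand : ∀ u v, (1/2:ℝ) * G.adj u v * (x u + x v)^2
      = (1/2:ℝ) * G.adj u v * x u ^ 2 + G.adj u v * (x u * x v)
          + (1/2:ℝ) * G.adj u v * x v ^ 2 := fun u v => by ring
  simp_rw [expand, Finset.sum_add_distrib]
  rw [swap]
  have hL : x ⬝ᵥ (Matrix.diagonal G.degree + G.adj) *ᵥ x
      = (∑ u, ∑ v, G.adj u v * x u ^ 2) + ∑ u, ∑ v, G.adj u v * (x u * x v) := by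
    rw [Matrix.add_mulVec, dotProduct_add]
    congr 1
    · simp only [dotProduct, Matrix.mulVec_diagonal, Semigraph.degree]
      refine Finset.sum_congr rfl fun u _ => ?_
      rw [Finset.sum_mul, Finset.mul_sum]
      exact Finset.sum_congr rfl fun v _ => by ring
    · have hd : x ⬝ᵥ (G.adj *ᵥ x) = ∑ u, x u * ∑ v, G.adj u v * x v := rfl
      rw [hd]
      refine Finset.sum_congr rfl fun u _ => ?_
      rw [Finset.mul_sum]
      exact Finset.sum_congr rfl fun v _ => by ring
  have hh : (∑ u, ∑ v, (1/2:ℝ) * G.adj u v * x u ^ 2)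
        + ∑ u, ∑ v, (1/2:ℝ) * G.adj u v * x u ^ 2
      = ∑ u, ∑ v, G.adj u v * x u ^ 2 := by
    rw [← Finset.sum_add_distrib]
    refine Finset.sum_congr rfl fun u _ => ?_
    rw [← Finset.sum_add_distrib]
    exact Finset.sum_congr rfl fun v _ => by ring
  rw [hL]
  linarith [hh]

lemma key_edges (x : V → ℝ) :
    ∑ e ∈ G.edges, (1/2 : ℝ) * ∑ u, ∑ v, G.pairWeight e u v * (x u + x v)^2
      = ∑ u, ∑ v, (1/2 : ℝ) * G.adj u v * (x u + x v)^2 := by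
  simp_rw [Semigraph.adj, Finset.mul_sum, Finset.sum_mul]
  rw [Finset.sum_comm]
  refine Finset.sum_congr rfl fun u _ => ?_
  rw [Finset.sum_comm]
  refine Finset.sum_congr rfl fun v _ => Finset.sum_congr rfl fun e _ => by ring

end Aux

/-- the factor `1/2` compensates each unordered pair being counted twice. -/
theorem stmt4 {V : Type} [Fintype V] [DecidableEq V] (G : Semigraph V) :
    (Matrix.diagonal G.degree + G.adj).PosSemidef ∧
      ∀ x : V → ℝ,
        x ⬝ᵥ (Matrix.diagonal G.degree + G.adj) *ᵥ x =
          ∑ e ∈ G.edges, (1/2 : ℝ) * ∑ u, ∑ v, G.pairWeight e u v * (x u + x v)^2 := by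
  constructor
  · refine Matrix.PosSemidef.of_dotProduct_mulVec_nonneg ?_ ?_
    · ext u v
      simp only [Matrix.conjTranspose_apply, Matrix.add_apply, Matrix.diagonal_apply,
        star_trivial]
      rw [adj_symm]
      by_cases h : u = v <;> simp [h, eq_comm]
    · intro x
      simp only [star_trivial]
      rw [key_quad_s4]
      refine Finset.sum_nonneg fun u _ => Finset.sum_nonneg fun v _ => ?_
      have := adj_nonneg G u v
      positivity
  · intro x
    rw [key_quad_s4, key_edges]
end

section
/- Let G be a connected semigraph and f a vector with Lf = 0, where L is the Laplacian. Then f is constant, i.e., f is a scalar multiple of the all-ones vector. -/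
open Matrix BigOperators

namespace Semigraph

variable {V : Type} [Fintype V] [DecidableEq V]

lemma pairWeight_nonneg' (G : Semigraph V) (e : List V) (u v : V) :
    0 ≤ G.pairWeight e u v := by
  unfold Semigraph.pairWeight
  split_ifs <;> positivity

lemma pairWeight_pos' (G : Semigraph V) {e : List V} {u v : V}
    (hu : u ∈ e) (hv : v ∈ e) (huv : u ≠ v) : 0 < G.pairWeight e u v := by
  unfold Semigraph.pairWeight
  rw [if_pos ⟨hu, hv, huv⟩]
  have hidx : e.idxOf u ≠ e.idxOf v := fun h => huv ((List.idxOf_inj hu).1 h)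
  have hd : 0 < Nat.dist (e.idxOf u) (e.idxOf v) :=
    Nat.pos_of_ne_zero (fun h => hidx (Nat.eq_of_dist_eq_zero h))
  have hd' : (0:ℝ) < (Nat.dist (e.idxOf u) (e.idxOf v) : ℝ) := by exact_mod_cast hd
  split_ifs <;> positivity

lemma adj_nonneg' (G : Semigraph V) (u v : V) : 0 ≤ G.adj u v :=
  Finset.sum_nonneg fun e _ => pairWeight_nonneg' G e u v

lemma adj_pos' (G : Semigraph V) {u v : V} {e : List V} (he : e ∈ G.edges)
    (hu : u ∈ e) (hv : v ∈ e) (huv : u ≠ v) : 0 < G.adj u v :=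
  Finset.sum_pos' (fun e _ => pairWeight_nonneg' G e u v)
    ⟨e, he, pairWeight_pos' G hu hv huv⟩

lemma key' (G : Semigraph V) (f : V → ℝ) (hf : G.lap *ᵥ f = 0) (u : V) :
    ∑ v, G.adj u v * (f u - f v) = 0 := by
  have h := congrFun hf u
  rw [Semigraph.lap, Matrix.sub_mulVec] at h
  simp only [Pi.sub_apply, Pi.zero_apply, Matrix.mulVec, dotProduct,
    Matrix.diagonal_apply, ite_mul, zero_mul, Finset.sum_ite_eq, Finset.mem_univ,
    if_true, Semigraph.degree] at h
  calc ∑ v, G.adj u v * (f u - f v)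
      = (∑ v, G.adj u v) * f u - ∑ v, G.adj u v * f v := by
        rw [Finset.sum_mul, ← Finset.sum_sub_distrib]
        congr 1; ext v; ring
    _ = 0 := h

end Semigraph

/-- If `G` is a connected semigraph and `L f = 0`, then `f` is a constant
vector. -/
theorem stmt8 {V : Type} [Fintype V] [DecidableEq V] (G : Semigraph V)
    (hG : G.Connected) (f : V → ℝ) (hf : G.lap *ᵥ f = 0) :
    ∃ c : ℝ, f = fun _ => c := by
  cases isEmpty_or_nonempty V with
  | inl h => exact ⟨0, funext fun v => (h.false v).elim⟩
  | inr h =>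
    obtain ⟨u0, -, hmax⟩ := Finset.exists_max_image Finset.univ f Finset.univ_nonempty
    refine ⟨f u0, funext fun v => ?_⟩
    have step : ∀ b c : V, f b = f u0 → (∃ e ∈ G.edges, b ∈ e ∧ c ∈ e) → f c = f u0 := by
      intro b c hb ⟨e, he, hbe, hce⟩
      by_cases hbc : b = c
      · rwa [← hbc]
      · have hkey := Semigraph.key' G f hf b
        have hnn : ∀ v ∈ Finset.univ, 0 ≤ G.adj b v * (f b - f v) := fun v _ =>
          mul_nonneg (Semigraph.adj_nonneg' G b v)
            (by rw [hb]; linarith [hmax v (Finset.mem_univ v)])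
        have hz := (Finset.sum_eq_zero_iff_of_nonneg hnn).1 hkey c (Finset.mem_univ c)
        have hpos := Semigraph.adj_pos' G he hbe hce hbc
        have : f b - f c = 0 := by
          rcases mul_eq_zero.1 hz with h' | h'
          · exact absurd h' (ne_of_gt hpos)
          · exact h'
        linarith [hb]
    have : ∀ v, f v = f u0 := by
      intro v
      induction hG u0 v with
      | refl => rfl
      | tail _ hr ih => exact step _ _ ih hr
    exact this v
end
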